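/- A dynamical system (X,T) has the small boundary property if and only if dim(X,T) = 0. -/

import Mathlib

open MeasureTheory Set
open scoped ENNReal Classical

/-- The order of a finite collection of sets at a point: (number of members containing x) − 1. -/
noncomputable def ordAt {X : Type*} (V : Finset (Set X)) (x : X) : ℝ :=
  ((V.filter fun A => x ∈ A).card : ℝ) - 1

/-- A finite open cover. -/
def IsOpenCover {X : Type*} [TopologicalSpace X] (U : Finset (Set X)) : Prop :=
  (∀ A ∈ U, IsOpen A) ∧ ⋃₀ (U : Set (Set X)) = Set.univ

/-- `Refines U V` : every element of `V` is contained in some element of `U` (V ⪰ U). -/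
def Refines {X : Type*} (U V : Finset (Set X)) : Prop :=
  ∀ B ∈ V, ∃ A ∈ U, B ⊆ A

/-- The set of T-invariant Borel probability measures. -/
def invProb {X Γ : Type*} [TopologicalSpace X] [MeasurableSpace X]
    (T : Γ → X ≃ₜ X) : Set (ProbabilityMeasure X) :=
  {μ | ∀ γ : Γ, (μ : Measure X).map (T γ) = (μ : Measure X)}

/-- The capacity of a Borel set with respect to the action:
cap(A,T) = sup over invariant μ of μ(A). -/
noncomputable def cap {X Γ : Type*} [TopologicalSpace X] [MeasurableSpace X]
    (T : Γ → X ≃ₜ X) (A : Set X) : ℝ≥0∞ :=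
  ⨆ μ ∈ invProb T, (μ : Measure X) A

/-- dim(X,T) = sup over finite open covers U of inf over finite open covers V refining U
of sup over invariant μ of ∫ ord(V,x) dμ(x). -/
noncomputable def dimDyn {X Γ : Type*} [TopologicalSpace X] [MeasurableSpace X]
    (T : Γ → X ≃ₜ X) : ℝ≥0∞ :=
  ⨆ U ∈ {U : Finset (Set X) | IsOpenCover U},
    ⨅ V ∈ {V : Finset (Set X) | IsOpenCover V ∧ Refines U V},
      ⨆ μ ∈ invProb T, ENNReal.ofReal (∫ x, ordAt V x ∂(μ : Measure X))

set_option linter.unusedSectionVars false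
set_option maxHeartbeats 1000000

section aux2
open BoundedContinuousFunction
open scoped NNReal
variable {X : Type*} [MetricSpace X] [CompactSpace X] [MeasurableSpace X] [BorelSpace X]

/-- make a bounded continuous ℝ≥0-valued function from a continuous bounded one -/
noncomputable def mkBCF (φ : X → ℝ≥0) (hc : Continuous φ) (C : ℝ≥0) (hb : ∀ x, φ x ≤ C) :
    X →ᵇ ℝ≥0 := by
  refine ⟨⟨φ, hc⟩, C, fun x y => ?_⟩
  simp only [ContinuousMap.coe_mk, NNReal.dist_eq]
  rw [abs_sub_le_iff]
  constructor
  · have h1 : (φ x : ℝ) ≤ C := hb x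
    have h2 : (0:ℝ) ≤ φ y := (φ y).2
    linarith
  · have h1 : (φ y : ℝ) ≤ C := hb y
    have h2 : (0:ℝ) ≤ φ x := (φ x).2
    linarith

lemma mkBCF_apply (φ : X → ℝ≥0) (hc : Continuous φ) (C : ℝ≥0) (hb : ∀ x, φ x ≤ C) (x : X) :
    mkBCF φ hc C hb x = φ x := rfl

/-- view a bounded continuous function on a compact space as compactly supported -/
noncomputable def ofBCF (f : X →ᵇ ℝ≥0) : CompactlySupportedContinuousMap X ℝ≥0 :=
  CompactlySupportedContinuousMap.continuousMapEquiv f.toContinuousMap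

lemma bcf_le_nndist (f : X →ᵇ ℝ≥0) (x : X) : f x ≤ nndist f 0 := by
  have := BoundedContinuousFunction.dist_coe_le_dist (f := f) (g := 0) x
  rw [← NNReal.coe_le_coe]
  calc (f x : ℝ) = dist (f x) ((0 : X →ᵇ ℝ≥0) x) := by
        simp [NNReal.dist_eq]
    _ ≤ dist f 0 := this
    _ = nndist f 0 := by rw [dist_nndist]

lemma bcf_integrable (f : X →ᵇ ℝ≥0) (μ : Measure X) [IsFiniteMeasure μ] :
    Integrable (fun x => (f x : ℝ)) μ := by
  have hc : Continuous (fun x => (f x : ℝ)) := NNReal.continuous_coe.comp f.continuous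
  have := ContinuousOn.integrableOn_compact (μ := μ) isCompact_univ hc.continuousOn
  rwa [integrableOn_univ] at this


variable {Γ : Type*} [Group Γ]

lemma cap_small_nbhd (T : Γ → X ≃ₜ X) {K : Set X} (hK : IsClosed K)
    (hK0 : ∀ μ ∈ invProb T, (μ : Measure X) K = 0) {ε : ℝ} (hε : 0 < ε) :
    ∃ O : Set X, IsOpen O ∧ K ⊆ O ∧
      ∀ μ ∈ invProb T, (μ : Measure X) O ≤ ENNReal.ofReal ε := by
  by_contra hcon
  push_neg at hcon
  -- a sequence of invariant measures charging shrinking neighborhoods of K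
  have hν : ∀ j : ℕ, ∃ μ : ProbabilityMeasure X, μ ∈ invProb T ∧
      ENNReal.ofReal ε < (μ : Measure X) (Metric.thickening (1/(j+1) : ℝ) K) := by
    intro j
    obtain ⟨μ, hμ1, hμ2⟩ := hcon (Metric.thickening (1/(j+1) : ℝ) K)
      Metric.isOpen_thickening (Metric.self_subset_thickening (by positivity) K)
    exact ⟨μ, hμ1, hμ2⟩
  choose ν hνinv hνbig using hν
  -- the ultrafilter
  set 𝒰 : Ultrafilter ℕ := Ultrafilter.of Filter.atTop with h𝒰def
  have h𝒰 : (𝒰 : Filter ℕ) ≤ Filter.atTop := Ultrafilter.of_le _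
  -- the integrals and the limit functional
  set I : (X →ᵇ ℝ≥0) → ℕ → ℝ := fun f j => ∫ x, (f x : ℝ) ∂(ν j : Measure X) with hIdef
  have hIbd : ∀ f j, I f j ∈ Icc (0:ℝ) (nndist f 0) := by
    intro f j
    constructor
    · exact integral_nonneg (fun x => (f x).2)
    · calc I f j ≤ ∫ _, (nndist f 0 : ℝ) ∂(ν j : Measure X) := by
            refine integral_mono (bcf_integrable f _) (integrable_const _) ?_
            intro x
            exact_mod_cast bcf_le_nndist f x
        _ = nndist f 0 := by simp
  have hlim : ∀ f : X →ᵇ ℝ≥0, ∃ c : ℝ, 0 ≤ c ∧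
      Filter.Tendsto (I f) (𝒰 : Filter ℕ) (nhds c) := by
    intro f
    have hle : (𝒰.map (I f) : Filter ℝ) ≤ Filter.principal (Icc (0:ℝ) (nndist f 0)) := by
      rw [Filter.le_principal_iff]
      exact Filter.mem_map.2 (Filter.univ_mem' (fun j => hIbd f j))
    obtain ⟨c, hc, hcle⟩ := isCompact_Icc.ultrafilter_le_nhds (𝒰.map (I f)) hle
    exact ⟨c, hc.1, hcle⟩
  set lam0 : (X →ᵇ ℝ≥0) → ℝ := fun f => (hlim f).choose with hlam0def
  have hlam0 : ∀ f, 0 ≤ lam0 f ∧ Filter.Tendsto (I f) (𝒰 : Filter ℕ) (nhds (lam0 f)) :=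
    fun f => (hlim f).choose_spec
  -- additivity etc. of lam0
  have hadd : ∀ f g, lam0 (f + g) = lam0 f + lam0 g := by
    intro f g
    refine tendsto_nhds_unique (hlam0 (f+g)).2 ?_
    have : I (f + g) = fun j => I f j + I g j := by
      funext j
      rw [hIdef]
      simp only
      rw [← integral_add (bcf_integrable f _) (bcf_integrable g _)]
      congr 1
    rw [this]
    exact ((hlam0 f).2).add ((hlam0 g).2)
  have hsmul : ∀ (c : ℝ≥0) (f), lam0 (c • f) = (c : ℝ) * lam0 f := by
    intro c f
    refine tendsto_nhds_unique (hlam0 (c • f)).2 ?_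
    have : I (c • f) = fun j => (c:ℝ) * I f j := by
      funext j
      rw [hIdef]
      simp only
      rw [← MeasureTheory.integral_const_mul]
      congr 1
    rw [this]
    exact ((hlam0 f).2).const_mul _
  have hmono : ∀ f g : X →ᵇ ℝ≥0, (∀ x, f x ≤ g x) → lam0 f ≤ lam0 g := by
    intro f g hfg
    refine le_of_tendsto_of_tendsto' (hlam0 f).2 (hlam0 g).2 (fun j => ?_)
    refine integral_mono (bcf_integrable f _) (bcf_integrable g _) (fun x => ?_)
    exact_mod_cast hfg x
  have hone : lam0 1 = 1 := by
    refine tendsto_nhds_unique (hlam0 1).2 ?_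
    have : I 1 = fun _ => (1:ℝ) := by
      funext j
      rw [hIdef]
      simp
    rw [this]
    exact tendsto_const_nhds
  -- the linear functional
  set Lam : (X →ᵇ ℝ≥0) →ₗ[ℝ≥0] ℝ≥0 :=
    { toFun := fun f => Real.toNNReal (lam0 f)
      map_add' := fun f g => by
        rw [hadd, Real.toNNReal_add (hlam0 f).1 (hlam0 g).1]
      map_smul' := fun c f => by
        simp only [RingHom.id_apply, smul_eq_mul]
        rw [hsmul, Real.toNNReal_mul (by positivity), Real.toNNReal_coe] } with hLamdef
  have hLamapply : ∀ f, Lam f = Real.toNNReal (lam0 f) := fun f => rfl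
  have hLammono : ∀ f g : X →ᵇ ℝ≥0, (∀ x, f x ≤ g x) → Lam f ≤ Lam g := by
    intro f g h
    rw [hLamapply, hLamapply]
    exact Real.toNNReal_mono (hmono f g h)
  have hLam1 : Lam 1 = 1 := by
    rw [hLamapply, hone]; simp
  set LamC : CompactlySupportedContinuousMap X ℝ≥0 →ₗ[ℝ≥0] ℝ≥0 :=
    { toFun := fun f => Lam f.toBoundedContinuousFunction
      map_add' := fun f g => by
        have h : (f + g).toBoundedContinuousFunction =
            f.toBoundedContinuousFunction + g.toBoundedContinuousFunction := by ext x; rfl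
        exact (congrArg Lam h).trans (map_add Lam _ _)
      map_smul' := fun c f => by
        have h : (c • f).toBoundedContinuousFunction = c • f.toBoundedContinuousFunction := by
          ext x; rfl
        exact (congrArg Lam h).trans (map_smul Lam c _) } with hLamCdef
  -- the content
  set lam : MeasureTheory.Content X :=
    { toFun := rieszContentAux LamC
      mono' := fun K₁ K₂ h => rieszContentAux_mono LamC h
      sup_le' := rieszContentAux_sup_le LamC
      sup_disjoint' := by
        intro K₁ K₂ hdisj _ _
        refine le_antisymm (rieszContentAux_sup_le LamC K₁ K₂) ?_
        refine le_csInf (rieszContentAux_image_nonempty LamC (K₁ ⊔ K₂)) ?_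
        rintro b ⟨fc, hf, rfl⟩
        set f := fc.toBoundedContinuousFunction with hfdef
        obtain ⟨h, h0, h1, hIcc⟩ := exists_continuous_zero_one_of_isClosed
          K₁.isCompact.isClosed K₂.isCompact.isClosed hdisj
        have hcont1 : Continuous (fun x => f x * Real.toNNReal (1 - h x)) :=
          f.continuous.mul (continuous_real_toNNReal.comp (continuous_const.sub h.continuous))
        have hcont2 : Continuous (fun x => f x * Real.toNNReal (h x)) :=
          f.continuous.mul (continuous_real_toNNReal.comp h.continuous)
        have hb1 : ∀ x, f x * Real.toNNReal (1 - h x) ≤ nndist f 0 := by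
          intro x
          refine le_trans (mul_le_of_le_one_right zero_le ?_) (bcf_le_nndist f x)
          have : Real.toNNReal 1 = 1 := by simp
          rw [← this]
          exact Real.toNNReal_mono (by linarith [(hIcc x).1])
        have hb2 : ∀ x, f x * Real.toNNReal (h x) ≤ nndist f 0 := by
          intro x
          refine le_trans (mul_le_of_le_one_right zero_le ?_) (bcf_le_nndist f x)
          exact Real.toNNReal_le_one.2 (hIcc x).2
        set g₁ := mkBCF _ hcont1 _ hb1 with hg₁
        set g₂ := mkBCF _ hcont2 _ hb2 with hg₂
        have hsum : g₁ + g₂ = f := by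
          ext x
          rw [NNReal.coe_inj]
          show f x * Real.toNNReal (1 - h x) + f x * Real.toNNReal (h x) = f x
          rw [← mul_add]
          have : Real.toNNReal (1 - h x) + Real.toNNReal (h x) = 1 := by
            have e1 : (0:ℝ) ≤ 1 - h x := by linarith [(hIcc x).2]
            have e2 : (0:ℝ) ≤ h x := (hIcc x).1
            rw [← NNReal.coe_inj]
            push_cast [Real.coe_toNNReal _ e1, Real.coe_toNNReal _ e2]
            ring
          rw [this, mul_one]
        have hK₁g₁ : ∀ x ∈ K₁, 1 ≤ g₁ x := by
          intro x hx
          show 1 ≤ f x * Real.toNNReal (1 - h x)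
          have : h x = 0 := h0 hx
          rw [this]
          simp only [sub_zero, Real.toNNReal_one, mul_one]
          exact hf x (Or.inl hx)
        have hK₂g₂ : ∀ x ∈ K₂, 1 ≤ g₂ x := by
          intro x hx
          show 1 ≤ f x * Real.toNNReal (h x)
          have : h x = 1 := h1 hx
          rw [this]
          simp only [Real.toNNReal_one, mul_one]
          exact hf x (Or.inr hx)
        calc rieszContentAux LamC K₁ + rieszContentAux LamC K₂ ≤ Lam g₁ + Lam g₂ :=
              add_le_add (rieszContentAux_le LamC (f := ofBCF g₁) hK₁g₁)
              (rieszContentAux_le LamC (f := ofBCF g₂) hK₂g₂)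
          _ = Lam (g₁ + g₂) := (map_add Lam g₁ g₂).symm
          _ = LamC fc := by show Lam (g₁ + g₂) = Lam f; rw [hsum] } with hlamdef
  set μstar : Measure X := lam.measure with hμstardef
  have hμs : ∀ {s : Set X}, MeasurableSet s → μstar s = lam.outerMeasure s :=
    fun hs => MeasureTheory.Content.measure_apply lam hs
  -- lam of univ is 1
  have hlamuniv : rieszContentAux LamC ⟨univ, isCompact_univ⟩ = 1 := by
    refine le_antisymm ?_ ?_
    · refine csInf_le (OrderBot.bddBelow _) ⟨ofBCF 1, fun x _ => le_refl 1, hLam1⟩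
    · refine le_csInf (rieszContentAux_image_nonempty LamC _) ?_
      rintro b ⟨f, hf, rfl⟩
      rw [← hLam1]
      exact hLammono 1 f.toBoundedContinuousFunction (fun x => hf x trivial)
  -- total mass one
  have huniv : μstar univ = 1 := by
    rw [hμs MeasurableSet.univ]
    have h1 : lam.outerMeasure (univ : Set X)
        = lam.innerContent ⟨univ, isOpen_univ⟩ :=
      lam.outerMeasure_opens ⟨univ, isOpen_univ⟩
    rw [h1]
    have h2 : lam.innerContent ⟨univ, isOpen_univ⟩
        = (lam ⟨univ, isCompact_univ⟩ : ℝ≥0∞) :=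
      le_antisymm (lam.innerContent_le _ _ subset_rfl) (lam.le_innerContent _ _ subset_rfl)
    rw [h2]
    show ((rieszContentAux LamC ⟨univ, isCompact_univ⟩ : ℝ≥0) : ℝ≥0∞) = 1
    rw [hlamuniv]
    simp
  have hprob : IsProbabilityMeasure μstar := ⟨huniv⟩
  -- invariance of the functional under measure-preserving homeomorphisms
  have hLamcomp : ∀ (e : X ≃ₜ X), (∀ j, ((ν j : Measure X)).map e = (ν j : Measure X)) →
      ∀ f : X →ᵇ ℝ≥0, Lam (f.compContinuous (e : C(X, X))) = Lam f := by
    intro e he f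
    rw [hLamapply, hLamapply]
    congr 1
    refine tendsto_nhds_unique (hlam0 _).2 ?_
    have hIeq : I (f.compContinuous (e : C(X, X))) = I f := by
      funext j
      rw [hIdef]
      simp only
      have h1 : ∫ x, (f (e x) : ℝ) ∂(ν j : Measure X)
          = ∫ y, (f y : ℝ) ∂(((ν j : Measure X)).map e) :=
        (integral_map (e.continuous.measurable.aemeasurable)
          ((NNReal.continuous_coe.comp f.continuous).aestronglyMeasurable)).symm
      have h2 : ∀ x, ((f.compContinuous (e : C(X, X))) x : ℝ) = (f (e x) : ℝ) := fun x => rfl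
      calc ∫ x, ((f.compContinuous (e : C(X, X))) x : ℝ) ∂(ν j : Measure X)
          = ∫ x, (f (e x) : ℝ) ∂(ν j : Measure X) := by simp only [h2]
        _ = ∫ y, (f y : ℝ) ∂(((ν j : Measure X)).map e) := h1
        _ = ∫ y, (f y : ℝ) ∂(ν j : Measure X) := by rw [he j]
    rw [hIeq]
    exact (hlam0 f).2
  have hνsymm : ∀ (j : ℕ) (γ : Γ), ((ν j : Measure X)).map ((T γ).symm) = (ν j : Measure X) := by
    intro j γ
    conv_lhs => rw [← hνinv j γ]
    rw [Measure.map_map ((T γ).symm.continuous.measurable) ((T γ).continuous.measurable)]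
    have : ((T γ).symm : X → X) ∘ (T γ) = id := by
      funext x; exact (T γ).symm_apply_apply x
    rw [this, Measure.map_id]
  -- invariance of the content
  have hKinv : ∀ (γ : Γ) ⦃Kc : TopologicalSpace.Compacts X⦄,
      ((lam (Kc.map (T γ) (T γ).continuous) : ℝ≥0∞)) = lam Kc := by
    intro γ Kc
    suffices hsuff : rieszContentAux LamC (Kc.map (T γ) (T γ).continuous) = rieszContentAux LamC Kc by
      show ((rieszContentAux LamC _ : ℝ≥0) : ℝ≥0∞) = ((rieszContentAux LamC _ : ℝ≥0) : ℝ≥0∞)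
      rw [hsuff]
    unfold rieszContentAux
    congr 1
    apply Set.Subset.antisymm
    · rintro b ⟨f, hf, rfl⟩
      refine ⟨ofBCF (f.toBoundedContinuousFunction.compContinuous ((T γ) : C(X, X))), fun x hx => ?_,
        hLamcomp (T γ) (fun j => hνinv j γ) f.toBoundedContinuousFunction⟩
      exact hf _ ⟨x, hx, rfl⟩
    · rintro b ⟨g, hg, rfl⟩
      refine ⟨ofBCF (g.toBoundedContinuousFunction.compContinuous (((T γ).symm) : C(X, X))),
        fun y hy => ?_, hLamcomp (T γ).symm (fun j => hνsymm j γ) g.toBoundedContinuousFunction⟩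
      obtain ⟨x, hx, rfl⟩ := hy
      show (1 : ℝ≥0) ≤ g ((T γ).symm ((T γ) x))
      rw [(T γ).symm_apply_apply x]
      exact hg x hx
  -- invariance of the measure
  have hinv : ∀ γ : Γ, μstar.map (T γ) = μstar := by
    intro γ
    have hout := lam.outerMeasure_preimage (T γ) (hKinv γ)
    refine Measure.ext fun s hs => ?_
    rw [Measure.map_apply (T γ).continuous.measurable hs,
      hμs (hs.preimage (T γ).continuous.measurable), hμs hs]
    exact hout s
  -- lower bound on μstar K
  have hKge : ENNReal.ofReal ε ≤ μstar K := by
    rw [hμs hK.measurableSet, lam.outerMeasure_eq_iInf]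
    refine le_iInf fun U => le_iInf fun hU => le_iInf fun hKU => ?_
    refine le_trans ?_ (lam.le_innerContent ⟨K, hK.isCompact⟩ ⟨U, hU⟩ hKU)
    have hmain : ε.toNNReal ≤ rieszContentAux LamC ⟨K, hK.isCompact⟩ := by
      refine le_csInf (rieszContentAux_image_nonempty LamC _) ?_
      rintro b ⟨fc, hf, rfl⟩
      show ε.toNNReal ≤ Lam fc.toBoundedContinuousFunction
      set f := fc.toBoundedContinuousFunction with hfdef
      replace hf : ∀ x ∈ K, (1:ℝ≥0) ≤ f x := hf
      rw [hLamapply]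
      refine Real.toNNReal_mono ?_
      by_contra hlt
      push_neg at hlt
      set δ : ℝ := (ε - lam0 f)/(2*ε) with hδdef
      have hδ0 : 0 < δ := by
        apply div_pos (by linarith) (by linarith)
      have hδ1 : δ < 1 := by
        rw [div_lt_one (by linarith)]
        have := (hlam0 f).1
        linarith
      have hkey : (1-δ)*ε ≤ lam0 f := by
        set V := {x : X | 1 - δ < (f x : ℝ)} with hVdef
        have hVopen : IsOpen V :=
          isOpen_lt continuous_const (NNReal.continuous_coe.comp f.continuous)
        have hKV : K ⊆ V := by
          intro x hx
          have h1 : (1:ℝ) ≤ (f x : ℝ) := by exact_mod_cast hf x hx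
          show 1 - δ < (f x : ℝ)
          linarith
        obtain ⟨δ', hδ'0, hδ'sub⟩ := hK.isCompact.exists_thickening_subset_open hVopen hKV
        obtain ⟨j₀, hj₀⟩ := exists_nat_one_div_lt hδ'0
        have hev : ∀ j ≥ j₀, (1-δ)*ε ≤ I f j := by
          intro j hj
          set Oj := Metric.thickening (1/(j+1):ℝ) K with hOjdef
          have hsub : Oj ⊆ V := by
            refine le_trans (Metric.thickening_mono ?_ K) hδ'sub
            calc (1/(j+1):ℝ) ≤ 1/(j₀+1) := by
                  apply one_div_le_one_div_of_le (by positivity)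
                  have : (j₀ : ℝ) ≤ j := by exact_mod_cast hj
                  linarith
              _ ≤ δ' := le_of_lt hj₀
          have hpt : ∀ x, Set.indicator Oj (fun _ => (1-δ:ℝ)) x ≤ (f x : ℝ) := by
            intro x
            by_cases hx : x ∈ Oj
            · rw [Set.indicator_of_mem hx]
              exact le_of_lt (hsub hx)
            · rw [Set.indicator_of_notMem hx]
              exact (f x).2
          have hOmeas : MeasurableSet Oj := Metric.isOpen_thickening.measurableSet
          have hindint : Integrable (Set.indicator Oj (fun _ => (1-δ:ℝ))) (ν j : Measure X) := by
            rw [integrable_indicator_iff hOmeas]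
            exact integrableOn_const
          have hint2 : ∫ x, Set.indicator Oj (fun _ => (1-δ:ℝ)) x ∂(ν j : Measure X) ≤ I f j :=
            integral_mono hindint (bcf_integrable f _) hpt
          have hval : ∫ x, Set.indicator Oj (fun _ => (1-δ:ℝ)) x ∂(ν j : Measure X)
              = (1-δ) * ((ν j : Measure X) Oj).toReal := by
            rw [integral_indicator_const _ hOmeas]
            simp [mul_comm, measureReal_def]
          have hbig : ε ≤ ((ν j : Measure X) Oj).toReal := by
            have h1 := le_of_lt (hνbig j)
            have h2 : (ENNReal.ofReal ε).toReal ≤ ((ν j : Measure X) Oj).toReal :=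
              ENNReal.toReal_mono (measure_ne_top _ _) h1
            rwa [ENNReal.toReal_ofReal (le_of_lt hε)] at h2
          calc (1-δ)*ε ≤ (1-δ) * ((ν j : Measure X) Oj).toReal := by
                apply mul_le_mul_of_nonneg_left hbig (by linarith)
            _ = ∫ x, Set.indicator Oj (fun _ => (1-δ:ℝ)) x ∂(ν j : Measure X) := hval.symm
            _ ≤ I f j := hint2
        refine ge_of_tendsto (hlam0 f).2 ?_
        exact (Filter.eventually_atTop.2 ⟨j₀, hev⟩).filter_mono h𝒰
      have hδε : δ * ε = (ε - lam0 f)/2 := by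
        rw [hδdef]; field_simp
      have hexp : (1-δ)*ε = ε - δ*ε := by ring
      rw [hexp, hδε] at hkey
      linarith
    calc ENNReal.ofReal ε = ((ε.toNNReal : ℝ≥0) : ℝ≥0∞) := rfl
      _ ≤ ((rieszContentAux LamC ⟨K, hK.isCompact⟩ : ℝ≥0) : ℝ≥0∞) := ENNReal.coe_le_coe.2 hmain
  -- assemble the contradiction
  set μP : ProbabilityMeasure X := ⟨μstar, hprob⟩ with hμPdef
  have hμPinv : μP ∈ invProb T := by
    intro γ
    show μstar.map (T γ) = μstar
    exact hinv γ
  have hzero := hK0 μP hμPinv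
  have : (μP : Measure X) = μstar := rfl
  rw [this] at hzero
  rw [hzero] at hKge
  exact absurd (lt_of_lt_of_le (ENNReal.ofReal_pos.2 hε) hKge) (lt_irrefl 0)

end aux2


section aux
open BoundedContinuousFunction

variable {X : Type*} [MetricSpace X] [CompactSpace X] [MeasurableSpace X] [BorelSpace X]

lemma ordAt_card_eq_sum (V : Finset (Set X)) (x : X) :
    (((V.filter fun A => x ∈ A).card : ℝ)) = ∑ A ∈ V, Set.indicator A (fun _ => (1:ℝ)) x := by
  rw [Finset.card_filter]
  push_cast
  refine Finset.sum_congr rfl fun A _ => ?_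
  by_cases h : x ∈ A <;> simp [Set.indicator_apply, h]

lemma integrable_ordAt (V : Finset (Set X)) (hV : ∀ A ∈ V, MeasurableSet A)
    (μ : Measure X) [IsFiniteMeasure μ] : Integrable (ordAt V) μ := by
  have : ordAt V = fun x => (∑ A ∈ V, Set.indicator A (fun _ => (1:ℝ)) x) - 1 := by
    funext x; rw [ordAt, ordAt_card_eq_sum]
  rw [this]
  refine Integrable.sub ?_ (integrable_const 1)
  refine integrable_finset_sum _ fun A hA => ?_
  rw [integrable_indicator_iff (hV A hA)]
  exact integrableOn_const

lemma ordAt_nonneg {V : Finset (Set X)} (hV : ⋃₀ (V : Set (Set X)) = Set.univ) (x : X) :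
    0 ≤ ordAt V x := by
  have : x ∈ ⋃₀ (V : Set (Set X)) := by rw [hV]; trivial
  obtain ⟨A, hA, hxA⟩ := this
  have : A ∈ V.filter fun A => x ∈ A := Finset.mem_filter.2 ⟨hA, hxA⟩
  have hc : 1 ≤ (V.filter fun A => x ∈ A).card := Finset.card_pos.2 ⟨A, this⟩
  simp only [ordAt, sub_nonneg]
  exact_mod_cast hc

lemma one_le_ordAt {V : Finset (Set X)} {x : X} {A B : Set X} (hA : A ∈ V) (hB : B ∈ V)
    (hAB : A ≠ B) (hxA : x ∈ A) (hxB : x ∈ B) : 1 ≤ ordAt V x := by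
  have h2 : ({A, B} : Finset (Set X)) ⊆ V.filter fun C => x ∈ C := by
    intro C hC
    rcases Finset.mem_insert.1 hC with rfl | hC
    · exact Finset.mem_filter.2 ⟨hA, hxA⟩
    · rw [Finset.mem_singleton.1 hC]; exact Finset.mem_filter.2 ⟨hB, hxB⟩
  have := Finset.card_le_card h2
  rw [Finset.card_pair hAB] at this
  simp only [ordAt, le_sub_iff_add_le]
  norm_num
  exact_mod_cast this

variable {Γ : Type*} [Group Γ] (T : Γ → X ≃ₜ X)

lemma exists_refinement (hdim : dimDyn T = 0) {U : Finset (Set X)} (hU : IsOpenCover U)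
    {ε : ℝ≥0∞} (hε : 0 < ε) (hε' : ε ≠ ⊤) :
    ∃ V : Finset (Set X), IsOpenCover V ∧ Refines U V ∧
      ∀ μ ∈ invProb T, ENNReal.ofReal (∫ x, ordAt V x ∂(μ : Measure X)) < ε := by
  have h1 : (⨅ V ∈ {V : Finset (Set X) | IsOpenCover V ∧ Refines U V},
      ⨆ μ ∈ invProb T, ENNReal.ofReal (∫ x, ordAt V x ∂(μ : Measure X))) = 0 := by
    have := hdim
    rw [dimDyn] at this
    rw [ENNReal.iSup_eq_zero] at this
    have := this U
    rw [ENNReal.iSup_eq_zero] at this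
    exact this hU
  have h2 : (⨅ V ∈ {V : Finset (Set X) | IsOpenCover V ∧ Refines U V},
      ⨆ μ ∈ invProb T, ENNReal.ofReal (∫ x, ordAt V x ∂(μ : Measure X))) < ε := by
    rw [h1]; exact hε
  rw [iInf_lt_iff] at h2
  obtain ⟨V, hV⟩ := h2
  rw [iInf_lt_iff] at hV
  obtain ⟨hVmem, hVlt⟩ := hV
  refine ⟨V, hVmem.1, hVmem.2, fun μ hμ => lt_of_le_of_lt ?_ hVlt⟩
  exact le_iSup₂ (f := fun μ (_ : μ ∈ invProb T) =>
    ENNReal.ofReal (∫ x, ordAt V x ∂(μ : Measure X))) μ hμ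


variable {Γ : Type*} [Group Γ] (T : Γ → X ≃ₜ X)

/-- The key step: shrink a binary open cover keeping overlap small. -/
lemma step_lemma (hdim : dimDyn T = 0) (E E' : Set X) (hE : IsOpen E) (hE' : IsOpen E')
    (hEE' : E ∪ E' = univ) {ε : ℝ} (hε : 0 < ε) :
    ∃ F F' : Set X, IsOpen F ∧ IsOpen F' ∧ F ∪ F' = univ ∧
      closure F ⊆ E ∧ closure F' ⊆ E' ∧
      ∀ μ ∈ invProb T, (μ : Measure X) (F ∩ F') ≤ ENNReal.ofReal ε := by
  -- shrink the cover
  have hcl1 : IsClosed E'ᶜ := hE'.isClosed_compl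
  have hsub1 : E'ᶜ ⊆ E := by
    intro y hy
    rcases (by rw [hEE']; trivial : y ∈ E ∪ E') with h | h
    · exact h
    · exact absurd h hy
  obtain ⟨B, hBo, hB1, hB2⟩ := normal_exists_closure_subset hcl1 hE hsub1
  have hsub2 : Bᶜ ⊆ E' := by
    intro y hy
    by_contra hyE'
    exact hy (hB1 (fun h => hyE' h))
  obtain ⟨B', hB'o, hB'1, hB'2⟩ := normal_exists_closure_subset hBo.isClosed_compl hE' hsub2
  have hBB' : B ∪ B' = univ := by
    apply eq_univ_of_forall
    intro y
    by_cases h : y ∈ B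
    · exact Or.inl h
    · exact Or.inr (hB'1 h)
  -- the cover {B, B'} and its refinement
  have hcov : IsOpenCover ({B, B'} : Finset (Set X)) := by
    constructor
    · intro A hA
      rcases Finset.mem_insert.1 hA with rfl | hA
      · exact hBo
      · rw [Finset.mem_singleton.1 hA]; exact hB'o
    · apply eq_univ_of_forall
      intro y
      rcases (by rw [hBB']; trivial : y ∈ B ∪ B') with h | h
      · exact ⟨B, by simp, h⟩
      · exact ⟨B', by simp, h⟩
  obtain ⟨V, hVcov, hVref, hVsmall⟩ :=
    exists_refinement T hdim hcov (ε := ENNReal.ofReal ε) (by simp [hε]) ENNReal.ofReal_ne_top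
  classical
  set F : Set X := ⋃₀ ↑(V.filter fun A => closure A ⊆ E) with hF
  set F' : Set X := ⋃₀ ↑(V.filter fun A => ¬ closure A ⊆ E) with hF'
  have hFo : IsOpen F := by
    apply isOpen_sUnion
    intro A hA
    rw [Finset.coe_filter, mem_setOf_eq] at hA
    exact hVcov.1 A hA.1
  have hF'o : IsOpen F' := by
    apply isOpen_sUnion
    intro A hA
    rw [Finset.coe_filter, mem_setOf_eq] at hA
    exact hVcov.1 A hA.1
  have hcup : F ∪ F' = univ := by
    apply eq_univ_of_forall
    intro y
    have : y ∈ ⋃₀ (V : Set (Set X)) := by rw [hVcov.2]; trivial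
    obtain ⟨A, hA, hyA⟩ := this
    by_cases h : closure A ⊆ E
    · exact Or.inl ⟨A, by rw [Finset.coe_filter]; exact ⟨hA, h⟩, hyA⟩
    · exact Or.inr ⟨A, by rw [Finset.coe_filter]; exact ⟨hA, h⟩, hyA⟩
  have hclF : closure F ⊆ E := by
    rw [hF, sUnion_eq_biUnion, (V.filter fun A => closure A ⊆ E).finite_toSet.closure_biUnion]
    apply iUnion₂_subset
    intro A hA
    rw [Finset.coe_filter, mem_setOf_eq] at hA
    exact hA.2
  have hclF' : closure F' ⊆ E' := by
    rw [hF', sUnion_eq_biUnion, (V.filter fun A => ¬ closure A ⊆ E).finite_toSet.closure_biUnion]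
    apply iUnion₂_subset
    intro A hA
    rw [Finset.coe_filter, mem_setOf_eq] at hA
    obtain ⟨C, hC, hAC⟩ := hVref A hA.1
    rcases Finset.mem_insert.1 hC with rfl | hC
    · exact absurd ((closure_mono hAC).trans hB2) hA.2
    · rw [Finset.mem_singleton.1 hC] at hAC
      exact (closure_mono hAC).trans hB'2
  refine ⟨F, F', hFo, hF'o, hcup, hclF, hclF', fun μ hμ => ?_⟩
  -- measure bound
  have hμsmall := hVsmall μ hμ
  have hind : ∀ x, Set.indicator (F ∩ F') (fun _ => (1:ℝ)) x ≤ ordAt V x := by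
    intro x
    by_cases hx : x ∈ F ∩ F'
    · rw [Set.indicator_of_mem hx]
      obtain ⟨⟨A, hA, hxA⟩, ⟨A', hA', hxA'⟩⟩ := hx
      rw [Finset.coe_filter, mem_setOf_eq] at hA hA'
      exact one_le_ordAt hA.1 hA'.1 (fun h => hA'.2 (h ▸ hA.2)) hxA hxA'
    · rw [Set.indicator_of_notMem hx]
      exact ordAt_nonneg hVcov.2 x
  have hmeas : MeasurableSet (F ∩ F') := (hFo.inter hF'o).measurableSet
  have hfin : IsFiniteMeasure (μ : Measure X) := inferInstance
  have hint : ∫ x, Set.indicator (F ∩ F') (fun _ => (1:ℝ)) x ∂(μ : Measure X)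
      ≤ ∫ x, ordAt V x ∂(μ : Measure X) := by
    refine integral_mono ?_ ?_ hind
    · rw [integrable_indicator_iff hmeas]
      exact integrableOn_const
    · exact integrable_ordAt V (fun A hA => (hVcov.1 A hA).measurableSet) _
  have h1 : ((μ : Measure X) (F ∩ F')) = ENNReal.ofReal
      (∫ x, Set.indicator (F ∩ F') (fun _ => (1:ℝ)) x ∂(μ : Measure X)) := by
    have : (fun x => Set.indicator (F ∩ F') (fun _ => (1:ℝ)) x) =
        Set.indicator (F ∩ F') (1 : X → ℝ) := rfl
    rw [this, integral_indicator_one hmeas, measureReal_def, ENNReal.ofReal_toReal (measure_ne_top _ _)]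
  rw [h1]
  calc ENNReal.ofReal (∫ x, Set.indicator (F ∩ F') (fun _ => (1:ℝ)) x ∂(μ : Measure X))
      ≤ ENNReal.ofReal (∫ x, ordAt V x ∂(μ : Measure X)) := ENNReal.ofReal_le_ofReal hint
    _ ≤ ENNReal.ofReal ε := (hμsmall).le


lemma sbp_of_dim (hdim : dimDyn T = 0) (U : Set X) (hU : IsOpen U) (x : X) (hx : x ∈ U) :
    ∃ V : Set X, IsOpen V ∧ x ∈ V ∧ V ⊆ U ∧ cap T (frontier V) = 0 := by
  obtain ⟨r, hr, hrU⟩ := (Metric.nhds_basis_closedBall.mem_iff).1 (hU.mem_nhds hx)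
  set Good : Set X × Set X → Prop :=
    fun p => IsOpen p.1 ∧ IsOpen p.2 ∧ p.1 ∪ p.2 = univ with hGoodDef
  have step : ∀ p : Set X × Set X, Good p → ∀ n : ℕ, ∃ q : Set X × Set X, Good q ∧
      closure q.1 ⊆ p.1 ∧ closure q.2 ⊆ p.2 ∧
      ∀ μ ∈ invProb T, (μ : Measure X) (q.1 ∩ q.2) ≤ ENNReal.ofReal ((1/2 : ℝ)^n) := by
    intro p hp n
    obtain ⟨F, F', h1, h2, h3, h4, h5, h6⟩ :=
      step_lemma T hdim p.1 p.2 hp.1 hp.2.1 hp.2.2 (ε := (1/2:ℝ)^n) (by positivity)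
    exact ⟨(F, F'), ⟨h1, h2, h3⟩, h4, h5, h6⟩
  set init : Set X × Set X := (Metric.ball x r, (Metric.closedBall x (r/2))ᶜ) with hinit
  have hinitGood : Good init := by
    refine ⟨Metric.isOpen_ball, Metric.isClosed_closedBall.isOpen_compl, ?_⟩
    apply eq_univ_of_forall
    intro y
    by_cases h : y ∈ Metric.closedBall x (r/2)
    · exact Or.inl (lt_of_le_of_lt (Metric.mem_closedBall.1 h) (by linarith))
    · exact Or.inr h
  set g : ℕ → Set X × Set X := fun n => Nat.rec init
    (fun n p => if h : Good p then Classical.choose (step p h n) else p) n with hg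
  have hgs : ∀ n, g (n+1) = if h : Good (g n) then Classical.choose (step (g n) h n)
      else g n := fun n => rfl
  have hGood : ∀ n, Good (g n) := by
    intro n
    induction n with
    | zero => exact hinitGood
    | succ n ih => rw [hgs, dif_pos ih]; exact (Classical.choose_spec (step (g n) ih n)).1
  have hrel : ∀ n, closure (g (n+1)).1 ⊆ (g n).1 ∧ closure (g (n+1)).2 ⊆ (g n).2 ∧
      ∀ μ ∈ invProb T, (μ : Measure X) ((g (n+1)).1 ∩ (g (n+1)).2)
        ≤ ENNReal.ofReal ((1/2 : ℝ)^n) := by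
    intro n
    rw [hgs, dif_pos (hGood n)]
    obtain ⟨_, h2, h3, h4⟩ := Classical.choose_spec (step (g n) (hGood n) n)
    exact ⟨h2, h3, h4⟩
  have anti1 : ∀ n, (g (n+1)).1 ⊆ (g n).1 := fun n => subset_closure.trans (hrel n).1
  have anti2 : ∀ n, (g (n+1)).2 ⊆ (g n).2 := fun n => subset_closure.trans (hrel n).2.1
  have anti1' : ∀ {n m}, n ≤ m → (g m).1 ⊆ (g n).1 := by
    intro n m h
    induction h with
    | refl => exact subset_rfl
    | step h ih => exact (anti1 _).trans ih
  have anti2' : ∀ {n m}, n ≤ m → (g m).2 ⊆ (g n).2 := by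
    intro n m h
    induction h with
    | refl => exact subset_rfl
    | step h ih => exact (anti2 _).trans ih
  set P : Set X := ⋂ n, (g n).1 with hP
  set P' : Set X := ⋂ n, (g n).2 with hP'
  have hPeq : P = ⋂ n, closure (g (n+1)).1 := by
    apply Subset.antisymm
    · exact subset_iInter fun n => (iInter_subset _ (n+1)).trans subset_closure
    · refine subset_iInter fun n => ?_
      exact (iInter_subset (fun n => closure (g (n+1)).1) n).trans (hrel n).1
  have hP'eq : P' = ⋂ n, closure (g (n+1)).2 := by
    apply Subset.antisymm
    · exact subset_iInter fun n => (iInter_subset _ (n+1)).trans subset_closure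
    · refine subset_iInter fun n => ?_
      exact (iInter_subset (fun n => closure (g (n+1)).2) n).trans (hrel n).2.1
  have hPclosed : IsClosed P := by rw [hPeq]; exact isClosed_iInter fun n => isClosed_closure
  have hP'closed : IsClosed P' := by rw [hP'eq]; exact isClosed_iInter fun n => isClosed_closure
  have hunion : P ∪ P' = univ := by
    apply eq_univ_of_forall
    intro y
    by_cases h : y ∈ P
    · exact Or.inl h
    · right
      rw [hP, mem_iInter] at h
      push_neg at h
      obtain ⟨n, hn⟩ := h
      rw [hP', mem_iInter]
      intro m
      rcases le_total m n with hmn | hmn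
      · refine anti2' hmn ?_
        rcases (by rw [(hGood n).2.2]; trivial : y ∈ (g n).1 ∪ (g n).2) with h | h
        · exact absurd h hn
        · exact h
      · rcases (by rw [(hGood m).2.2]; trivial : y ∈ (g m).1 ∪ (g m).2) with h | h
        · exact absurd (anti1' hmn h) hn
        · exact h
  refine ⟨P'ᶜ, hP'closed.isOpen_compl, ?_, ?_, ?_⟩
  · intro hxP'
    have : x ∈ (g 0).2 := by rw [hP', mem_iInter] at hxP'; exact hxP' 0
    exact this (Metric.mem_closedBall.2 (by simp [le_div_iff₀]; linarith))
  · have h1 : P'ᶜ ⊆ P := by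
      intro y hy
      rcases (by rw [hunion]; trivial : y ∈ P ∪ P') with h | h
      · exact h
      · exact absurd h hy
    refine h1.trans ?_
    refine (iInter_subset _ 0).trans ?_
    exact Metric.ball_subset_closedBall.trans hrU
  · -- cap of frontier is 0
    have hfr : frontier P'ᶜ ⊆ P ∩ P' := by
      intro y hy
      have h1 : P'ᶜ ⊆ P := by
        intro z hz
        rcases (by rw [hunion]; trivial : z ∈ P ∪ P') with h | h
        · exact h
        · exact absurd h hz
      have hyP : y ∈ P := hPclosed.closure_subset ((closure_mono h1) hy.1)
      have hyP' : y ∈ P' := by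
        by_contra hc
        exact hy.2 (interior_maximal (subset_refl _) hP'closed.isOpen_compl hc)
      exact ⟨hyP, hyP'⟩
    have hzero : ∀ μ ∈ invProb T, (μ : Measure X) (frontier P'ᶜ) = 0 := by
      intro μ hμ
      have hb : ∀ n : ℕ, (μ : Measure X) (frontier P'ᶜ) ≤ ENNReal.ofReal ((1/2 : ℝ)^n) := by
        intro n
        refine le_trans (measure_mono ?_) ((hrel n).2.2 μ hμ)
        refine hfr.trans ?_
        exact inter_subset_inter (iInter_subset _ (n+1)) (iInter_subset _ (n+1))
      have htend : Filter.Tendsto (fun n : ℕ => ENNReal.ofReal ((1/2 : ℝ)^n))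
          Filter.atTop (nhds 0) := by
        rw [show (0 : ℝ≥0∞) = ENNReal.ofReal 0 by simp]
        exact ENNReal.tendsto_ofReal
          (tendsto_pow_atTop_nhds_zero_of_lt_one (by norm_num) (by norm_num))
      exact le_antisymm (ge_of_tendsto htend (Filter.Eventually.of_forall hb)) zero_le
    rw [cap]
    refine le_antisymm (iSup₂_le fun μ hμ => le_of_eq (hzero μ hμ)) zero_le

lemma dim_of_sbp
    (hsbp : ∀ U : Set X, IsOpen U → ∀ x ∈ U, ∃ V : Set X, IsOpen V ∧ x ∈ V ∧ V ⊆ U ∧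
      cap T (frontier V) = 0) : dimDyn T = 0 := by
  rw [dimDyn, ENNReal.iSup_eq_zero]
  intro U
  rw [ENNReal.iSup_eq_zero]
  intro hU
  -- main claim: for every positive real ε the infimum is at most ofReal ε
  have main : ∀ ε : ℝ, 0 < ε →
      (⨅ V ∈ {V : Finset (Set X) | IsOpenCover V ∧ Refines U V},
        ⨆ μ ∈ invProb T, ENNReal.ofReal (∫ x, ordAt V x ∂(μ : Measure X)))
        ≤ ENNReal.ofReal ε := by
    intro ε hε
    -- SBP sets around every point
    have hchoice : ∀ x : X, ∃ V : Set X, IsOpen V ∧ x ∈ V ∧ (∃ A ∈ U, V ⊆ A) ∧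
        ∀ μ ∈ invProb T, (μ : Measure X) (frontier V) = 0 := by
      intro x
      have hxU : x ∈ ⋃₀ (U : Set (Set X)) := by rw [hU.2]; trivial
      obtain ⟨A, hA, hxA⟩ := hxU
      obtain ⟨V, hVo, hxV, hVA, hcap⟩ := hsbp A (hU.1 A hA) x hxA
      refine ⟨V, hVo, hxV, ⟨A, hA, hVA⟩, ?_⟩
      intro μ hμ
      rw [cap] at hcap
      rw [ENNReal.iSup_eq_zero] at hcap
      have := hcap μ
      rw [ENNReal.iSup_eq_zero] at this
      exact this hμ
    choose v hvo hvx hvsub hvnull using hchoice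
    -- finite subcover
    obtain ⟨t, ht⟩ := isCompact_univ.elim_finite_subcover v hvo
      (fun x _ => mem_iUnion.2 ⟨x, hvx x⟩)
    set l : List X := t.toList with hldef
    set n : ℕ := l.length with hndef
    set Vi : Fin n → Set X := fun i => v (l.get i) with hVidef
    have hVicov : ∀ y : X, ∃ i, y ∈ Vi i := by
      intro y
      obtain ⟨x, hx, hyx⟩ := mem_iUnion₂.1 (ht (mem_univ y))
      obtain ⟨i, hi⟩ := List.mem_iff_get.1 (Finset.mem_toList.2 hx)
      exact ⟨i, by rw [hVidef]; simp only; rw [hi]; exact hyx⟩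
    set W : Fin n → Set X := fun i => Vi i \ ⋃ j, ⋃ (_ : j < i), closure (Vi j) with hWdef
    have hWo : ∀ i, IsOpen (W i) := by
      intro i
      refine (hvo _).sdiff ?_
      refine isClosed_iUnion_of_finite (fun j => ?_)
      exact isClosed_iUnion_of_finite (fun _ => isClosed_closure)
    have hWVi : ∀ i, W i ⊆ Vi i := fun i => diff_subset
    have hWdisj : ∀ i j, i ≠ j → ∀ x, x ∈ W i → x ∈ W j → False := by
      intro i j hij x hxi hxj
      rcases lt_or_gt_of_ne hij with h | h
      · exact hxj.2 (mem_iUnion.2 ⟨i, mem_iUnion.2 ⟨h, subset_closure hxi.1⟩⟩)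
      · exact hxi.2 (mem_iUnion.2 ⟨j, mem_iUnion.2 ⟨h, subset_closure hxj.1⟩⟩)
    set K : Set X := univ \ ⋃ i, W i with hKdef
    have hKclosed : IsClosed K := by
      have h1 : IsOpen (⋃ i, W i) := isOpen_iUnion hWo
      have : K = (⋃ i, W i)ᶜ := by rw [hKdef]; ext z; simp
      rw [this]
      exact h1.isClosed_compl
    have hKsub : K ⊆ ⋃ i, frontier (Vi i) := by
      intro y hy
      have hyW : ∀ i, y ∉ W i := by
        intro i hi
        exact (mem_diff y).1 hy |>.2 (mem_iUnion.2 ⟨i, hi⟩)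
      set S : Finset (Fin n) := Finset.univ.filter (fun i => y ∈ closure (Vi i)) with hSdef
      have hSne : S.Nonempty := by
        obtain ⟨i, hi⟩ := hVicov y
        exact ⟨i, Finset.mem_filter.2 ⟨Finset.mem_univ i, subset_closure hi⟩⟩
      obtain ⟨i₀, hi₀S, hi₀min⟩ := S.exists_min_image id hSne
      have hycl : y ∈ closure (Vi i₀) := (Finset.mem_filter.1 hi₀S).2
      have hynot : y ∉ Vi i₀ := by
        intro hyVi
        refine hyW i₀ ⟨hyVi, ?_⟩
        intro hmem
        obtain ⟨j, hj⟩ := mem_iUnion.1 hmem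
        obtain ⟨hji, hycl'⟩ := mem_iUnion.1 hj
        have hjS : j ∈ S := Finset.mem_filter.2 ⟨Finset.mem_univ j, hycl'⟩
        exact absurd (hi₀min j hjS) (not_le.2 hji)
      refine mem_iUnion.2 ⟨i₀, ?_⟩
      rw [(hvo _).frontier_eq]
      exact ⟨hycl, hynot⟩
    have hKnull : ∀ μ ∈ invProb T, (μ : Measure X) K = 0 := by
      intro μ hμ
      refine measure_mono_null hKsub ?_
      exact measure_iUnion_null (fun i => hvnull _ μ hμ)
    -- balls subordinate to the cover
    have hballs : ∀ y : X, ∃ ρ : ℝ, 0 < ρ ∧ ∃ A ∈ U, Metric.ball y ρ ⊆ A := by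
      intro y
      have hyU : y ∈ ⋃₀ (U : Set (Set X)) := by rw [hU.2]; trivial
      obtain ⟨A, hA, hyA⟩ := hyU
      obtain ⟨ρ, hρ, hball⟩ := Metric.isOpen_iff.1 (hU.1 A hA) y hyA
      exact ⟨ρ, hρ, A, hA, hball⟩
    choose ρ hρpos AA hAAmem hAAball using hballs
    have hKcpt : IsCompact K := hKclosed.isCompact
    obtain ⟨s, hs⟩ := hKcpt.elim_finite_subcover (fun y => Metric.ball y (ρ y))
      (fun y => Metric.isOpen_ball) (fun y hy => mem_iUnion.2 ⟨y, Metric.mem_ball_self (hρpos y)⟩)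
    set m : ℕ := s.card with hmdef
    -- small neighborhood of K
    have hε' : 0 < ε / (n + m + 1) := by positivity
    obtain ⟨O, hOo, hKO, hOsmall⟩ := cap_small_nbhd T hKclosed hKnull hε'
    -- the refining cover
    set 𝒱 : Finset (Set X) :=
      (Finset.univ.image W) ∪ (s.image (fun y => Metric.ball y (ρ y) ∩ O)) with h𝒱def
    have h𝒱mem : ∀ B ∈ 𝒱, (∃ i, B = W i) ∨ (∃ y ∈ s, B = Metric.ball y (ρ y) ∩ O) := by
      intro B hB
      rcases Finset.mem_union.1 hB with h | h
      · obtain ⟨i, _, hi⟩ := Finset.mem_image.1 h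
        exact Or.inl ⟨i, hi.symm⟩
      · obtain ⟨y, hy, hyB⟩ := Finset.mem_image.1 h
        exact Or.inr ⟨y, hy, hyB.symm⟩
    have h𝒱open : ∀ B ∈ 𝒱, IsOpen B := by
      intro B hB
      rcases h𝒱mem B hB with ⟨i, rfl⟩ | ⟨y, _, rfl⟩
      · exact hWo i
      · exact Metric.isOpen_ball.inter hOo
    have h𝒱cover : ⋃₀ (𝒱 : Set (Set X)) = univ := by
      apply eq_univ_of_forall
      intro y
      by_cases hy : y ∈ ⋃ i, W i
      · obtain ⟨i, hi⟩ := mem_iUnion.1 hy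
        refine ⟨W i, Finset.mem_coe.2 (Finset.mem_union_left _
          (Finset.mem_image.2 ⟨i, Finset.mem_univ i, rfl⟩)), hi⟩
      · have hyK : y ∈ K := ⟨mem_univ y, hy⟩
        obtain ⟨z, hz, hyz⟩ := mem_iUnion₂.1 (hs hyK)
        refine ⟨Metric.ball z (ρ z) ∩ O, ?_, hyz, hKO hyK⟩
        exact Finset.mem_coe.2 (Finset.mem_union_right _
          (Finset.mem_image.2 ⟨z, hz, rfl⟩))
    have h𝒱cov : IsOpenCover 𝒱 := ⟨h𝒱open, h𝒱cover⟩
    have h𝒱ref : Refines U 𝒱 := by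
      intro B hB
      rcases h𝒱mem B hB with ⟨i, rfl⟩ | ⟨y, _, rfl⟩
      · obtain ⟨A, hA, hsub⟩ := hvsub (l.get i)
        exact ⟨A, hA, (hWVi i).trans hsub⟩
      · exact ⟨AA y, hAAmem y, inter_subset_left.trans (hAAball y)⟩
    -- cardinality bound
    have hcard : (𝒱.card : ℝ) ≤ n + m := by
      have h1 : 𝒱.card ≤ (Finset.univ.image W).card + (s.image (fun y => Metric.ball y (ρ y) ∩ O)).card :=
        Finset.card_union_le _ _
      have h2 : (Finset.univ.image W).card ≤ n := by
        refine le_trans (Finset.card_image_le) ?_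
        simp
      have h3 : (s.image (fun y => Metric.ball y (ρ y) ∩ O)).card ≤ m :=
        Finset.card_image_le
      have := le_trans h1 (add_le_add h2 h3)
      exact_mod_cast this
    -- the measure estimate
    refine le_trans (iInf₂_le 𝒱 ⟨h𝒱cov, h𝒱ref⟩) ?_
    refine iSup₂_le (fun μ hμ => ?_)
    have hpt : ∀ x, ordAt 𝒱 x ≤ Set.indicator O (fun _ => ((n:ℝ) + m)) x := by
      intro x
      by_cases hxO : x ∈ O
      · rw [Set.indicator_of_mem hxO]
        have h1 : (𝒱.filter fun A => x ∈ A).card ≤ 𝒱.card := Finset.card_filter_le _ _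
        have h2 : ((𝒱.filter fun A => x ∈ A).card : ℝ) ≤ (n:ℝ) + m := by
          refine le_trans ?_ hcard
          exact_mod_cast h1
        rw [ordAt]
        linarith
      · rw [Set.indicator_of_notMem hxO]
        have h1 : (𝒱.filter fun A => x ∈ A).card ≤ 1 := by
          refine Finset.card_le_one.2 (fun a ha b hb => ?_)
          obtain ⟨haV, hxa⟩ := Finset.mem_filter.1 ha
          obtain ⟨hbV, hxb⟩ := Finset.mem_filter.1 hb
          have hwa : ∃ i, a = W i := by
            rcases h𝒱mem a haV with h | ⟨y, _, rfl⟩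
            · exact h
            · exact absurd hxa.2 hxO
          have hwb : ∃ i, b = W i := by
            rcases h𝒱mem b hbV with h | ⟨y, _, rfl⟩
            · exact h
            · exact absurd hxb.2 hxO
          obtain ⟨i, rfl⟩ := hwa
          obtain ⟨j, rfl⟩ := hwb
          by_cases hij : i = j
          · rw [hij]
          · exact absurd (hWdisj i j hij x hxa hxb) (fun h => h)
        rw [ordAt]
        have : ((𝒱.filter fun A => x ∈ A).card : ℝ) ≤ 1 := by exact_mod_cast h1
        linarith
    have hOmeas : MeasurableSet O := hOo.measurableSet
    have hint : ∫ x, ordAt 𝒱 x ∂(μ : Measure X)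
        ≤ ∫ x, Set.indicator O (fun _ => ((n:ℝ) + m)) x ∂(μ : Measure X) := by
      refine integral_mono ?_ ?_ hpt
      · exact integrable_ordAt 𝒱 (fun A hA => (h𝒱open A hA).measurableSet) _
      · rw [integrable_indicator_iff hOmeas]
        exact integrableOn_const
    have hval : ∫ x, Set.indicator O (fun _ => ((n:ℝ) + m)) x ∂(μ : Measure X)
        = ((μ : Measure X) O).toReal * ((n:ℝ) + m) := by
      rw [integral_indicator_const _ hOmeas]
      simp [smul_eq_mul, measureReal_def]
    have hOs : ((μ : Measure X) O).toReal ≤ ε / (n + m + 1) := by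
      have h1 := hOsmall μ hμ
      have h2 : ((μ : Measure X) O).toReal ≤ (ENNReal.ofReal (ε / (n + m + 1))).toReal :=
        ENNReal.toReal_mono ENNReal.ofReal_ne_top h1
      rwa [ENNReal.toReal_ofReal (le_of_lt hε')] at h2
    have hfinal : ∫ x, ordAt 𝒱 x ∂(μ : Measure X) ≤ ε := by
      refine le_trans hint ?_
      rw [hval]
      calc ((μ : Measure X) O).toReal * ((n:ℝ) + m)
          ≤ (ε / (n + m + 1)) * ((n:ℝ) + m) := by
            apply mul_le_mul_of_nonneg_right hOs (by positivity)
        _ ≤ ε := by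
            rw [div_mul_eq_mul_div, div_le_iff₀ (by positivity)]
            nlinarith
    exact ENNReal.ofReal_le_ofReal hfinal
  -- conclude
  refine le_antisymm ?_ zero_le
  have htend : Filter.Tendsto (fun k : ℕ => ENNReal.ofReal (1/(k+1) : ℝ))
      Filter.atTop (nhds 0) := by
    rw [show (0 : ℝ≥0∞) = ENNReal.ofReal 0 by simp]
    exact ENNReal.tendsto_ofReal tendsto_one_div_add_atTop_nhds_zero_nat
  refine ge_of_tendsto htend (Filter.Eventually.of_forall (fun k => ?_))
  exact main (1/(k+1)) (by positivity)

end aux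

/-- A dynamical system has the small boundary property iff dim(X,T) = 0. -/
theorem stmt9 {X Γ : Type*} [MetricSpace X] [CompactSpace X] [MeasurableSpace X] [BorelSpace X]
    [Group Γ] [Countable Γ] (T : Γ → X ≃ₜ X)
    (hT : ∀ γ γ' : Γ, ∀ x : X, T (γ * γ') x = T γ (T γ' x)) :
    (∀ U : Set X, IsOpen U → ∀ x ∈ U, ∃ V : Set X, IsOpen V ∧ x ∈ V ∧ V ⊆ U ∧
        cap T (frontier V) = 0) ↔ dimDyn T = 0 := by
  constructor
  · intro hsbp
    exact dim_of_sbp T hsbp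
  · intro hdim U hU x hx
    exact sbp_of_dim T hdim U hU x hx
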